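/- arXiv:1205.0371 — 10 statements merged into one kernel-verified Lean document; each statement's English description precedes it below -/
import Mathlib

section
/- Let d be a squarefree positive integer with d ≡ 2 or 3 (mod 4) such that ℤ[√d] is a unique factorization domain, and let u be a unit of ℤ[√d] with N(u) = −1. Then α = 1 + u is irreducible in ℤ[√d] if and only if d = 2 and u ∈ {1+√2, 1−√2, −1+√2, −1−√2}. -/
open Zsqrtd

private lemma irred_of_natAbs_norm_prime {d : ℤ} {z : ℤ√d}
    (h : (Zsqrtd.norm z).natAbs.Prime) : Irreducible z := by
  constructor
  · intro hz
    rw [← Zsqrtd.norm_eq_one_iff] at hz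
    exact h.ne_one hz
  · intro x y hxy
    have hmul : (Zsqrtd.norm x).natAbs * (Zsqrtd.norm y).natAbs = (Zsqrtd.norm z).natAbs := by
      rw [hxy, Zsqrtd.norm_mul, Int.natAbs_mul]
    rcases h.eq_one_or_self_of_dvd (Zsqrtd.norm x).natAbs ⟨_, hmul.symm⟩ with h1 | h1
    · exact Or.inl (Zsqrtd.norm_eq_one_iff.mp h1)
    · right
      rw [Zsqrtd.norm_eq_one_iff.symm]
      have := hmul
      rw [h1] at this
      have hp := h.pos
      nlinarith [this]

/-- **Theorem 1.** Let `d` be a squarefree positive integer with `d ≡ 2, 3 (mod 4)`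
such that `ℤ√d` is a unique factorization domain, and let `u` be a unit of `ℤ√d`
with norm `-1`.  Then `α = 1 + u` is irreducible in `ℤ√d` if and only if `d = 2` and
`u ∈ {1+√2, 1-√2, -1+√2, -1-√2}`. -/
theorem mersenne_real_quadratic_irreducible_norm_neg_one
    (d : ℕ) (hd : 0 < d) (hsf : Squarefree d) (hmod : d % 4 = 2 ∨ d % 4 = 3)
    [Zsqrtd.Nonsquare d] [UniqueFactorizationMonoid (ℤ√(d : ℤ))]
    (u : (ℤ√(d : ℤ))ˣ) (hu : Zsqrtd.norm (u : ℤ√(d : ℤ)) = -1) :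
    Irreducible (1 + (u : ℤ√(d : ℤ))) ↔
      d = 2 ∧ ((u : ℤ√(d : ℤ)) = 1 + Zsqrtd.sqrtd ∨ (u : ℤ√(d : ℤ)) = 1 - Zsqrtd.sqrtd ∨
        (u : ℤ√(d : ℤ)) = -1 + Zsqrtd.sqrtd ∨ (u : ℤ√(d : ℤ)) = -1 - Zsqrtd.sqrtd) := by
  set a : ℤ := (u : ℤ√(d : ℤ)).re with ha
  set b : ℤ := (u : ℤ√(d : ℤ)).im with hb
  have hu' : a * a - (d : ℤ) * (b * b) = -1 := by
    have := hu
    rw [Zsqrtd.norm_def] at this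
    linarith [this]
  set α : ℤ√(d : ℤ) := 1 + (u : ℤ√(d : ℤ)) with hαdef
  have hαre : α.re = 1 + a := by simp [hαdef, ha]
  have hαim : α.im = b := by simp [hαdef, hb]
  have hαnorm : Zsqrtd.norm α = 2 * a := by
    rw [Zsqrtd.norm_def, hαre, hαim]
    linear_combination hu'
  constructor
  · intro hirr
    -- Step 1 : 2 is not a unit
    have h2cast : (2 : ℤ√(d : ℤ)) = ((2 : ℤ) : ℤ√(d : ℤ)) := by norm_cast
    have h2nu : ¬ IsUnit (2 : ℤ√(d : ℤ)) := by
      rw [← Zsqrtd.norm_eq_one_iff, h2cast, Zsqrtd.norm_intCast]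
      norm_num
    -- Step 2 : 2 is not prime
    have hnp : ¬ Prime (2 : ℤ√(d : ℤ)) := by
      rcases hmod with hm | hm
      · -- d even : 2 ∣ √d * √d but 2 ∤ √d
        intro hp
        have hdvd : (2 : ℤ√(d : ℤ)) ∣ Zsqrtd.sqrtd * Zsqrtd.sqrtd := by
          have hsq : (Zsqrtd.sqrtd * Zsqrtd.sqrtd : ℤ√(d : ℤ)) = ((d : ℤ) : ℤ√(d : ℤ)) := by
            ext <;> simp
          rw [hsq, h2cast, Zsqrtd.intCast_dvd_intCast]
          have : (2 : ℕ) ∣ d := by omega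
          exact_mod_cast this
        rcases hp.2.2 _ _ hdvd with h | h <;>
        · rw [h2cast, Zsqrtd.intCast_dvd] at h
          simp at h
      · -- d ≡ 3 : 2 ∣ (1+√d)(1-√d) but divides neither factor
        intro hp
        have hdvd : (2 : ℤ√(d : ℤ)) ∣ (1 + Zsqrtd.sqrtd) * (1 - Zsqrtd.sqrtd) := by
          have hsq : ((1 + Zsqrtd.sqrtd) * (1 - Zsqrtd.sqrtd) : ℤ√(d : ℤ))
              = ((1 - (d : ℤ)) : ℤ) := by
            ext <;> simp <;> ring
          rw [hsq, h2cast, Zsqrtd.intCast_dvd_intCast]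
          have h2 : (2 : ℤ) ∣ (1 - (d : ℤ)) := by
            have : d % 2 = 1 := by omega
            omega
          exact h2
        rcases hp.2.2 _ _ hdvd with h | h <;>
        · rw [h2cast, Zsqrtd.intCast_dvd] at h
          simp at h
    -- Step 3 : get a factor of 2 of norm ±2
    have hnirr : ¬ Irreducible (2 : ℤ√(d : ℤ)) := fun h =>
      hnp ((UniqueFactorizationMonoid.irreducible_iff_prime).mp h)
    obtain ⟨x, y, h2, hxnu, hynu⟩ :
        ∃ x y : ℤ√(d : ℤ), (2 : ℤ√(d : ℤ)) = x * y ∧ ¬ IsUnit x ∧ ¬ IsUnit y := by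
      by_contra hcon
      push_neg at hcon
      exact hnirr ⟨h2nu, fun p q hpq => or_iff_not_imp_left.mpr (hcon p q hpq)⟩
    have hprod : (Zsqrtd.norm x).natAbs * (Zsqrtd.norm y).natAbs = 4 := by
      have : Zsqrtd.norm (2 : ℤ√(d : ℤ)) = 4 := by rw [h2cast, Zsqrtd.norm_intCast]; norm_num
      have h4 : Zsqrtd.norm x * Zsqrtd.norm y = 4 := by rw [← Zsqrtd.norm_mul, ← h2, this]
      have := congrArg Int.natAbs h4
      rwa [Int.natAbs_mul] at this
    have hxn1 : (Zsqrtd.norm x).natAbs ≠ 1 := fun h => hxnu (Zsqrtd.norm_eq_one_iff.mp h)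
    have hyn1 : (Zsqrtd.norm y).natAbs ≠ 1 := fun h => hynu (Zsqrtd.norm_eq_one_iff.mp h)
    have hxn2 : (Zsqrtd.norm x).natAbs = 2 := by
      have hdvd4 : (Zsqrtd.norm x).natAbs ∣ 4 := ⟨_, hprod.symm⟩
      have hle : (Zsqrtd.norm x).natAbs ≤ 4 := Nat.le_of_dvd (by norm_num) hdvd4
      interval_cases h : (Zsqrtd.norm x).natAbs <;> omega
    -- Step 4 : x (or its conjugate) divides α
    have hxirr : Irreducible x := irred_of_natAbs_norm_prime (hxn2 ▸ Nat.prime_two)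
    have hxprime : Prime x := (UniqueFactorizationMonoid.irreducible_iff_prime).mp hxirr
    have hdvdα : x ∣ α * star α := by
      have hcastnorm : (α * star α : ℤ√(d : ℤ)) = (((2 * a : ℤ)) : ℤ√(d : ℤ)) := by
        rw [← Zsqrtd.norm_eq_mul_conj, hαnorm]
      rw [hcastnorm]
      have h2dvd : ((2 : ℤ) : ℤ√(d : ℤ)) ∣ ((2 * a : ℤ) : ℤ√(d : ℤ)) := by
        rw [Zsqrtd.intCast_dvd_intCast]
        exact ⟨a, rfl⟩
      exact dvd_trans ⟨y, h2⟩ (h2cast ▸ h2dvd)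
    obtain ⟨π, hπα, hπn⟩ : ∃ π : ℤ√(d : ℤ), π ∣ α ∧ (Zsqrtd.norm π).natAbs = 2 := by
      rcases hxprime.2.2 _ _ hdvdα with h | h
      · exact ⟨x, h, hxn2⟩
      · obtain ⟨c, hc⟩ := h
        refine ⟨star x, ⟨star c, ?_⟩, by rwa [Zsqrtd.norm_conj]⟩
        have := congrArg star hc
        rwa [star_star, star_mul, mul_comm] at this
    -- Step 5 : conclude |a| = 1
    obtain ⟨c, hc⟩ := hπα
    have hπnu : ¬ IsUnit π := fun h => by
      rw [← Zsqrtd.norm_eq_one_iff] at h; omega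
    have hcunit : IsUnit c := (hirr.isUnit_or_isUnit hc).resolve_left hπnu
    have hcn : (Zsqrtd.norm c).natAbs = 1 := Zsqrtd.norm_eq_one_iff.mpr hcunit
    have hnormeq : (2 * a).natAbs = 2 := by
      calc (2 * a).natAbs = (Zsqrtd.norm π).natAbs * (Zsqrtd.norm c).natAbs := by
            rw [← Int.natAbs_mul, ← Zsqrtd.norm_mul, ← hc, hαnorm]
        _ = 2 := by rw [hπn, hcn]
    have haval : a = 1 ∨ a = -1 := by omega
    -- Step 6 : derive d = 2 and b = ±1
    have haa : a * a = 1 := by rcases haval with h | h <;> rw [h] <;> ring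
    have hdb : (d : ℤ) * (b * b) = 2 := by linarith [hu']
    have hd1 : (1 : ℤ) ≤ (d : ℤ) := by exact_mod_cast hd
    have hbb0 : 0 ≤ b * b := mul_self_nonneg b
    have hbble : b * b ≤ 2 := by nlinarith
    have hbne : b * b ≠ 0 := by intro h; rw [h] at hdb; simp at hdb
    have hble : b ≤ 1 := by nlinarith [sq_nonneg (b - 1)]
    have hbge : -1 ≤ b := by nlinarith [sq_nonneg (b + 1)]
    have hb0 : b ≠ 0 := fun h => hbne (by rw [h]; ring)
    have hbval : b = 1 ∨ b = -1 := by omega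
    have hbb1 : b * b = 1 := by rcases hbval with h | h <;> rw [h] <;> ring
    have hd2 : d = 2 := by
      have : (d : ℤ) = 2 := by rw [hbb1, mul_one] at hdb; exact hdb
      exact_mod_cast this
    refine ⟨hd2, ?_⟩
    have huval : (u : ℤ√(d : ℤ)) = ⟨a, b⟩ := by ext <;> simp [ha, hb]
    rcases haval with h1 | h1 <;> rcases hbval with h2 | h2
    · left; rw [huval, Zsqrtd.ext_iff]; simp [h1, h2]
    · right; left; rw [huval, Zsqrtd.ext_iff]; simp [h1, h2]
    · right; right; left; rw [huval, Zsqrtd.ext_iff]; simp [h1, h2]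
    · right; right; right; rw [huval, Zsqrtd.ext_iff]; simp [h1, h2]
  · rintro ⟨hd2, hcase⟩
    apply irred_of_natAbs_norm_prime
    have : (Zsqrtd.norm α).natAbs = 2 := by
      rw [hαnorm]
      have hab : a * a - (d : ℤ) * (b * b) = -1 := hu'
      have hre : a = 1 ∨ a = -1 := by
        rcases hcase with h | h | h | h <;>
        · have h' := congrArg Zsqrtd.re h
          simp [← ha] at h'
          omega
      omega
    exact this ▸ Nat.prime_two
end

section
/- Let p ≥ 5 be a rational prime such that N(M_{p,α}) is a rational prime, and suppose N(M_{p,α}) = x² + 7y² for integers x, y. Then x ≡ 0 (mod 4) and y ≡ 3 or −3 (mod 8). -/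
/-- `α = 2 + √2` in `ℤ√2`. -/
def alphaZ : ℤ√2 := 2 + Zsqrtd.sqrtd

/-- The Mersenne number `M_{n,α} = (α^n - 1)/(α - 1) = (α^n - 1)·(√2 - 1)` in `ℤ√2`,
where `α = 2 + √2` (note `(α - 1)⁻¹ = (1 + √2)⁻¹ = √2 - 1`). -/
def Mers (n : ℕ) : ℤ√2 := (alphaZ ^ n - 1) * (Zsqrtd.sqrtd - 1)

/-- `v n` is the rational part of `(1 + √2)^n`, i.e. `(1+√2)^n = v n + (w n)·√2`. -/
def vCoeff (n : ℕ) : ℤ := (((1 + Zsqrtd.sqrtd : ℤ√2)) ^ n).re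

/-- `w n` is the coefficient of `√2` in `(1 + √2)^n`, i.e. `(1+√2)^n = v n + (w n)·√2`. -/
def wCoeff (n : ℕ) : ℤ := (((1 + Zsqrtd.sqrtd : ℤ√2)) ^ n).im

lemma key_zmod16 : ∀ a b : ZMod 16, a ^ 2 + 7 * b ^ 2 = 15 →
    (ZMod.castHom (by norm_num : (4:ℕ) ∣ 16) (ZMod 4) a = 0 ∧
      (ZMod.castHom (by norm_num : (8:ℕ) ∣ 16) (ZMod 8) b = 3 ∨
        ZMod.castHom (by norm_num : (8:ℕ) ∣ 16) (ZMod 8) b = -3)) := by decide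

lemma alphaZ_eq : alphaZ = Zsqrtd.sqrtd * (1 + Zsqrtd.sqrtd) := by
  ext <;> simp [alphaZ]

lemma norm_one_add_sqrtd : Zsqrtd.norm (1 + Zsqrtd.sqrtd : ℤ√2) = -1 := by
  simp [Zsqrtd.norm_def]

lemma vw_rel (p : ℕ) (hodd : Odd p) : (vCoeff p) ^ 2 - 2 * (wCoeff p) ^ 2 = -1 := by
  have h : Zsqrtd.norm ((1 + Zsqrtd.sqrtd : ℤ√2) ^ p) = -1 := by
    rw [show ((1 + Zsqrtd.sqrtd : ℤ√2) ^ p).norm = ((1 + Zsqrtd.sqrtd : ℤ√2).norm) ^ p from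
      map_pow Zsqrtd.normMonoidHom _ p, norm_one_add_sqrtd, hodd.neg_one_pow]
  rw [Zsqrtd.norm_def] at h
  have : ((1 + Zsqrtd.sqrtd : ℤ√2) ^ p).re = vCoeff p := rfl
  rw [this] at h
  have : ((1 + Zsqrtd.sqrtd : ℤ√2) ^ p).im = wCoeff p := rfl
  rw [this] at h
  ring_nf
  ring_nf at h
  linarith

lemma norm_mers_mod (p : ℕ) (hp5 : 5 ≤ p) (hp : Nat.Prime p) :
    Zsqrtd.norm (Mers p) ≡ -1 [ZMOD 16] := by
  have hodd : Odd p := hp.odd_of_ne_two (by omega)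
  obtain ⟨k, hk⟩ := hodd
  have hk2 : 2 ≤ k := by omega
  -- α^p = 2^k * (sqrtd * (1+sqrtd)^p)
  have hαp : alphaZ ^ p = ((2 ^ k : ℤ) : ℤ√2) * (Zsqrtd.sqrtd * (1 + Zsqrtd.sqrtd) ^ p) := by
    rw [alphaZ_eq, mul_pow, hk]
    have hs : (Zsqrtd.sqrtd : ℤ√2) ^ (2 * k + 1) = ((2 ^ k : ℤ) : ℤ√2) * Zsqrtd.sqrtd := by
      rw [pow_succ, pow_mul]
      congr 1
      · rw [sq, Zsqrtd.dmuld]; push_cast; ring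
    rw [hs]
    ring
  set v := vCoeff p with hv
  set w := wCoeff p with hw
  have hre : (alphaZ ^ p).re = 2 ^ (k + 1) * w := by
    rw [hαp]
    simp only [Zsqrtd.re_mul, Zsqrtd.im_mul, Zsqrtd.re_intCast, Zsqrtd.im_intCast,
      Zsqrtd.re_sqrtd, Zsqrtd.im_sqrtd]
    simp only [hv, hw, vCoeff, wCoeff]
    ring
  have him : (alphaZ ^ p).im = 2 ^ k * v := by
    rw [hαp]
    simp only [Zsqrtd.re_mul, Zsqrtd.im_mul, Zsqrtd.re_intCast, Zsqrtd.im_intCast,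
      Zsqrtd.re_sqrtd, Zsqrtd.im_sqrtd]
    simp only [hv, hw, vCoeff, wCoeff]
    ring
  have hrel : v ^ 2 - 2 * w ^ 2 = -1 := vw_rel p ⟨k, hk⟩
  have hnorm : Zsqrtd.norm (Mers p) =
      -((2 ^ (k + 1) * w - 1) ^ 2 - 2 * (2 ^ k * v) ^ 2) := by
    unfold Mers
    rw [Zsqrtd.norm_mul]
    have h1 : Zsqrtd.norm (Zsqrtd.sqrtd - 1 : ℤ√2) = -1 := by
      simp [Zsqrtd.norm_def]
    rw [h1, Zsqrtd.norm_def]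
    simp [Zsqrtd.re_sub, Zsqrtd.im_sub, hre, him]
    ring
  rw [hnorm]
  -- = -(2^(2k+2) w^2 - 2^(k+2) w + 1 - 2^(2k+1) v^2)
  -- using v^2 = 2w^2 - 1 : = 2^(k+2) w - 1 - 2^(2k+1)
  have hval : -((2 ^ (k + 1) * w - 1) ^ 2 - 2 * (2 ^ k * v) ^ 2)
      = 2 ^ (k + 2) * w - 1 - 2 ^ (2 * k + 1) := by
    linear_combination ((2:ℤ) ^ (2 * k + 1)) * hrel
  rw [hval]
  obtain ⟨j, hj⟩ : ∃ j, k = j + 2 := ⟨k - 2, by omega⟩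
  subst hj
  have : (2:ℤ) ^ (j + 2 + 2) * w - 1 - 2 ^ (2 * (j + 2) + 1)
      = -1 + 16 * (2 ^ j * w - 2 ^ (2 * j + 1)) := by ring
  rw [this]
  unfold Int.ModEq
  omega

/-- **Lemma (§3).** If `p ≥ 5` is prime, `N(M_{p,α})` is a rational prime and
`N(M_{p,α}) = x² + 7y²`, then `x ≡ 0 (mod 4)` and `y ≡ ±3 (mod 8)`. -/
theorem norm_mersenne_rep_four_dvd_and_y_mod_eight
    (p : ℕ) (hp5 : 5 ≤ p) (hp : Nat.Prime p)
    (hprime : Prime (Zsqrtd.norm (Mers p)))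
    (x y : ℤ) (hxy : Zsqrtd.norm (Mers p) = x ^ 2 + 7 * y ^ 2) :
    x ≡ 0 [ZMOD 4] ∧ (y ≡ 3 [ZMOD 8] ∨ y ≡ -3 [ZMOD 8]) := by
  have hmod : x ^ 2 + 7 * y ^ 2 ≡ -1 [ZMOD 16] := hxy ▸ norm_mers_mod p hp5 hp
  have h16 : ((x : ZMod 16)) ^ 2 + 7 * (y : ZMod 16) ^ 2 = 15 := by
    have := (ZMod.intCast_eq_intCast_iff' _ _ _).mpr hmod
    push_cast at this
    rw [this]
    decide
  obtain ⟨h4, h8⟩ := key_zmod16 (x : ZMod 16) (y : ZMod 16) h16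
  rw [map_intCast] at h4 h8
  constructor
  · have : ((x : ZMod 4)) = ((0 : ℤ) : ZMod 4) := by push_cast; exact h4
    exact (ZMod.intCast_eq_intCast_iff' _ _ _).mp this
  · rcases h8 with h | h
    · left
      have : ((y : ZMod 8)) = ((3 : ℤ) : ZMod 8) := by push_cast; exact h
      exact (ZMod.intCast_eq_intCast_iff' _ _ _).mp this
    · right
      have : ((y : ZMod 8)) = ((-3 : ℤ) : ZMod 8) := by push_cast; exact h
      exact (ZMod.intCast_eq_intCast_iff' _ _ _).mp this
end

section
/- Let n ≥ 1 be odd and not divisible by 3. If n ≡ 1 (mod 3) then N(M_{n,α}) ≡ 1 (mod 7), and if n ≡ 2 (mod 3) then N(M_{n,α}) ≡ 4 (mod 7). In particular N(M_{n,α}) is a quadratic residue modulo 7. -/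
/-- Ring hom `ℤ√2 → ZMod 7` sending `√2 ↦ 3`. -/
def phi7 : ℤ√2 →+* ZMod 7 := Zsqrtd.lift ⟨3, by decide⟩

/-- Ring hom `ℤ√2 → ZMod 7` sending `√2 ↦ 4`. -/
def psi7 : ℤ√2 →+* ZMod 7 := Zsqrtd.lift ⟨4, by decide⟩

lemma norm_cast7 (x : ℤ√2) : ((Zsqrtd.norm x : ℤ) : ZMod 7) = phi7 x * psi7 x := by
  have h7 : (7 : ZMod 7) = 0 := by decide
  simp [Zsqrtd.norm, phi7, psi7, Zsqrtd.lift]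
  linear_combination (-((x.re:ZMod 7) * x.im) - 2 * (x.im:ZMod 7)^2) * h7

lemma mers_cast7 (n : ℕ) :
    ((Zsqrtd.norm (Mers n) : ℤ) : ZMod 7)
      = ((5:ZMod 7)^n - 1) * 2 * (((6:ZMod 7)^n - 1) * 3) := by
  rw [norm_cast7]
  simp [Mers, alphaZ, map_sub, map_mul, map_pow, phi7, psi7, Zsqrtd.lift]
  ring_nf

/-- **(§3).** For odd `n ≥ 1` not divisible by `3`: if `n ≡ 1 (mod 3)` then
`N(M_{n,α}) ≡ 1 (mod 7)`, and if `n ≡ 2 (mod 3)` then `N(M_{n,α}) ≡ 4 (mod 7)`.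
In particular `N(M_{n,α})` is a quadratic residue modulo `7`. -/
theorem norm_mersenne_mod_seven
    (n : ℕ) (hn1 : 1 ≤ n) (hodd : Odd n) (h3 : ¬ (3 ∣ n)) :
    (n % 3 = 1 → Zsqrtd.norm (Mers n) ≡ 1 [ZMOD 7]) ∧
    (n % 3 = 2 → Zsqrtd.norm (Mers n) ≡ 4 [ZMOD 7]) ∧
    IsSquare ((Zsqrtd.norm (Mers n) : ZMod 7)) := by
  have hn2 : n % 2 = 1 := Nat.odd_iff.mp hodd
  have key := mers_cast7 n
  have hval : ((Zsqrtd.norm (Mers n) : ℤ) : ZMod 7) = if n % 3 = 1 then 1 else 4 := by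
    have hmod : n % 6 = 1 ∨ n % 6 = 5 := by omega
    rcases hmod with hr | hr
    · obtain ⟨k, hk⟩ : ∃ k, n = 6 * k + 1 := ⟨n / 6, by omega⟩
      have h31 : n % 3 = 1 := by omega
      rw [key, if_pos h31, hk]
      simp only [pow_add, pow_mul, show ((5:ZMod 7)^6)=1 by decide,
        show ((6:ZMod 7)^6)=1 by decide, one_pow]
      decide
    · obtain ⟨k, hk⟩ : ∃ k, n = 6 * k + 5 := ⟨n / 6, by omega⟩
      have h32 : ¬ n % 3 = 1 := by omega
      rw [key, if_neg h32, hk]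
      simp only [pow_add, pow_mul, show ((5:ZMod 7)^6)=1 by decide,
        show ((6:ZMod 7)^6)=1 by decide, one_pow]
      decide
  refine ⟨?_, ?_, ?_⟩
  · intro h1
    rw [if_pos h1] at hval
    have := (ZMod.intCast_eq_intCast_iff (Zsqrtd.norm (Mers n)) 1 7).mp (by push_cast; exact hval)
    exact_mod_cast this
  · intro h2
    rw [if_neg (by omega : ¬ n % 3 = 1)] at hval
    have := (ZMod.intCast_eq_intCast_iff (Zsqrtd.norm (Mers n)) 4 7).mp (by push_cast; exact hval)
    exact_mod_cast this
  · rw [hval]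
    split
    · exact ⟨1, by norm_num⟩
    · exact ⟨2, by norm_num⟩
end

section
/- For every odd integer n ≥ 3, N(M_{n,α}) ≡ 7 (mod 8) (i.e., N(M_{n,α}) ≡ −1 (mod 8)). -/
lemma alphaZ_pow_six : alphaZ ^ 6 = 8 * (⟨99, 70⟩ : ℤ√2) := by
  decide

lemma eight_dvd_alphaZ_pow {n : ℕ} (h : 6 ≤ n) : (8 : ℤ√2) ∣ alphaZ ^ n := by
  obtain ⟨k, rfl⟩ := Nat.exists_eq_add_of_le h
  rw [pow_add, alphaZ_pow_six]
  exact ⟨⟨99, 70⟩ * alphaZ ^ k, by ring⟩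

/-- **(Property 3, §1).** For every odd `n ≥ 3`, `N(M_{n,α}) ≡ -1 ≡ 7 (mod 8)`. -/
theorem norm_mersenne_mod_eight (n : ℕ) (hn : 3 ≤ n) (hodd : Odd n) :
    Zsqrtd.norm (Mers n) ≡ 7 [ZMOD 8] := by
  rcases Nat.lt_or_ge n 6 with h | h
  · interval_cases n
    · decide
    · exact absurd hodd (by decide)
    · decide
  · obtain ⟨c, hc⟩ := eight_dvd_alphaZ_pow h
    have hnorm : Zsqrtd.norm (Mers n) =
        16 * c.re - 64 * c.re ^ 2 + 128 * c.im ^ 2 - 1 := by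
      simp only [Mers, hc, Zsqrtd.norm_def, Zsqrtd.re_mul, Zsqrtd.im_mul,
        Zsqrtd.re_sub, Zsqrtd.im_sub, Zsqrtd.re_one, Zsqrtd.im_one]
      simp [Zsqrtd.ext_iff, Zsqrtd.re_mul, Zsqrtd.im_mul]
      ring
    rw [hnorm]
    have : (7 : ℤ) - (16 * c.re - 64 * c.re ^ 2 + 128 * c.im ^ 2 - 1) =
        8 * (1 - 2 * c.re + 8 * c.re ^ 2 - 16 * c.im ^ 2) := by ring
    exact Int.modEq_iff_dvd.mpr ⟨_, this⟩
end

section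
/- For every odd integer n ≥ 5, N(M_{n,α}) ≡ 15 (mod 16) (i.e., N(M_{n,α}) ≡ −1 (mod 16)). -/
/-- **(§3).** For every odd `n ≥ 5`, `N(M_{n,α}) ≡ -1 ≡ 15 (mod 16)`. -/
theorem norm_mersenne_mod_sixteen (n : ℕ) (hn : 5 ≤ n) (hodd : Odd n) :
    Zsqrtd.norm (Mers n) ≡ 15 [ZMOD 16] := by
  obtain ⟨k, hk⟩ := hodd
  have hk2 : 2 ≤ k := by omega
  obtain ⟨m, hm⟩ : ∃ m, k = m + 2 := ⟨k - 2, by omega⟩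
  have halpha : alphaZ = Zsqrtd.sqrtd * (1 + Zsqrtd.sqrtd) := by
    simp [alphaZ, Zsqrtd.ext_iff]
  have hsq : (Zsqrtd.sqrtd : ℤ√2) ^ 2 = 2 := by
    simp [Zsqrtd.ext_iff, pow_two]
  have hcast : ((2 : ℤ√2)) ^ k = (((2 ^ k : ℤ)) : ℤ√2) := by push_cast; ring
  have hx : alphaZ ^ n = (((2 ^ k : ℤ)) : ℤ√2) * Zsqrtd.sqrtd * (1 + Zsqrtd.sqrtd) ^ n := by
    rw [halpha, mul_pow, hk, pow_succ, pow_mul, hsq, hcast]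
  have hre : (alphaZ ^ n).re = 2 ^ (k+1) * wCoeff n := by
    rw [hx]
    simp only [Zsqrtd.re_mul, Zsqrtd.im_mul, Zsqrtd.re_intCast, Zsqrtd.im_intCast,
      Zsqrtd.re_sqrtd, Zsqrtd.im_sqrtd, wCoeff]
    ring
  have him : (alphaZ ^ n).im = 2 ^ k * vCoeff n := by
    rw [hx]
    simp only [Zsqrtd.re_mul, Zsqrtd.im_mul, Zsqrtd.re_intCast, Zsqrtd.im_intCast,
      Zsqrtd.re_sqrtd, Zsqrtd.im_sqrtd, vCoeff]
    ring
  have hnorm : Zsqrtd.norm (Mers n) =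
      -(((alphaZ ^ n).re - 1)^2 - 2 * ((alphaZ ^ n).im)^2) := by
    rw [Mers, Zsqrtd.norm_mul]
    simp [Zsqrtd.norm]
    ring
  rw [hnorm, hre, him, hm]
  rw [Int.modEq_iff_dvd]
  exact ⟨4 * (2^m)^2 * (wCoeff n)^2 - 2^m * (wCoeff n) - 2 * (2^m)^2 * (vCoeff n)^2 + 1, by ring⟩
end

section
/- For every odd integer n ≥ 1, N(M_{n,α}) = 2^{(n+3)/2}·w_n − 2^n − 1, where w_n is the coefficient of √2 in (1+√2)^n. -/
/-- **(Property 2, §1).** For odd `n ≥ 1`,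
`N(M_{n,α}) = 2^((n+3)/2)·w_n - 2^n - 1`, where `(1+√2)^n = v_n + w_n√2`. -/
theorem norm_mersenne_eq_pow_mul_w_sub (n : ℕ) (hn : 1 ≤ n) (hodd : Odd n) :
    Zsqrtd.norm (Mers n) = 2 ^ ((n + 3) / 2) * wCoeff n - 2 ^ n - 1 := by
  obtain ⟨k, hk⟩ := hodd
  subst hk
  set u : ℤ√2 := (1 + Zsqrtd.sqrtd) ^ (2 * k + 1) with hu
  have hα : alphaZ = Zsqrtd.sqrtd * (1 + Zsqrtd.sqrtd) := by
    ext <;> simp [alphaZ]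
  have hs : (Zsqrtd.sqrtd : ℤ√2) ^ (2 * k + 1) = ((2 ^ k : ℤ) : ℤ√2) * Zsqrtd.sqrtd := by
    rw [pow_succ, pow_mul]
    norm_num [pow_two, Zsqrtd.dmuld]
  have hpow : alphaZ ^ (2 * k + 1) = ((2 ^ k : ℤ) : ℤ√2) * (Zsqrtd.sqrtd * u) := by
    rw [hα, mul_pow, hs, hu, mul_assoc]
  have h2re : ∀ m : ℕ, ((2 : ℤ√2) ^ m).re = 2 ^ m ∧ ((2 : ℤ√2) ^ m).im = 0 := by
    intro m
    induction m with
    | zero => simp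
    | succ m ih => simp [pow_succ, Zsqrtd.re_mul, Zsqrtd.im_mul, ih.1, ih.2]
  have hnu : Zsqrtd.norm u = -1 := by
    have hmp := map_pow (Zsqrtd.normMonoidHom (d := 2)) (1 + Zsqrtd.sqrtd) (2 * k + 1)
    simp only [Zsqrtd.normMonoidHom, MonoidHom.coe_mk, OneHom.coe_mk] at hmp
    rw [hu, hmp]
    have h2 : Zsqrtd.norm (1 + Zsqrtd.sqrtd : ℤ√2) = -1 := by
      simp [Zsqrtd.norm_def]
    rw [h2, Odd.neg_one_pow ⟨k, rfl⟩]
  have hvw : vCoeff (2 * k + 1) ^ 2 - 2 * wCoeff (2 * k + 1) ^ 2 = -1 := by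
    have := hnu
    rw [Zsqrtd.norm_def] at this
    simp only [vCoeff, wCoeff, ← hu]
    ring_nf
    ring_nf at this
    linarith
  -- compute norm directly
  have hM : Zsqrtd.norm (Mers (2 * k + 1))
      = Zsqrtd.norm (alphaZ ^ (2 * k + 1) - 1) * Zsqrtd.norm (Zsqrtd.sqrtd - 1 : ℤ√2) := by
    rw [Mers, Zsqrtd.norm_mul]
  have h1 : Zsqrtd.norm (Zsqrtd.sqrtd - 1 : ℤ√2) = -1 := by
    simp [Zsqrtd.norm_def]
  have hre2 : (alphaZ ^ (2 * k + 1) - 1).re = 2 ^ (k + 1) * wCoeff (2 * k + 1) - 1 := by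
    rw [hpow]
    simp [Zsqrtd.re_mul, Zsqrtd.im_mul, Zsqrtd.re_intCast, Zsqrtd.im_intCast, (h2re k).1, (h2re k).2, wCoeff, ← hu]
    ring
  have him2 : (alphaZ ^ (2 * k + 1) - 1).im = 2 ^ k * vCoeff (2 * k + 1) := by
    rw [hpow]
    simp [Zsqrtd.re_mul, Zsqrtd.im_mul, Zsqrtd.re_intCast, Zsqrtd.im_intCast, (h2re k).1, (h2re k).2, vCoeff, ← hu]
  have hdiv : (2 * k + 1 + 3) / 2 = k + 2 := by omega
  rw [hM, h1, Zsqrtd.norm_def, hre2, him2, hdiv]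
  have hp : (2 : ℤ) ^ (2 * k + 1) = 2 * (2 ^ k * 2 ^ k) := by
    rw [pow_succ, ← pow_add]; ring_nf
  rw [hp]
  simp only [pow_succ]
  linear_combination (2 * (2:ℤ) ^ k * 2 ^ k) * hvw
end

section
/- For every odd integer p ≥ 5, N(M_{p,α}) = h·2^{(p+3)/2} − 1 where h = w_p − 2^{(p−3)/2} is an odd integer (w_p being the coefficient of √2 in (1+√2)^p). -/
lemma im_odd (m : ℕ) : Odd (((1 + Zsqrtd.sqrtd : ℤ√2)) ^ (2*m+1)).im := by
  induction m with
  | zero => simp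
  | succ m ih =>
    have h : 2*(m+1)+1 = (2*m+1) + 2 := by ring
    rw [h, pow_add]
    obtain ⟨j, hj⟩ := ih
    refine ⟨((1 + Zsqrtd.sqrtd : ℤ√2) ^ (2*m+1)).re + 3*j + 1, ?_⟩
    simp [pow_two, Zsqrtd.im_mul, Zsqrtd.re_mul, hj]
    ring

/-- **(§2).** For every odd `p ≥ 5`, `N(M_{p,α}) = h·2^((p+3)/2) - 1` with
`h = w_p - 2^((p-3)/2)` odd. -/
theorem norm_mersenne_eq_h_mul_pow_sub_one (p : ℕ) (hp : 5 ≤ p) (hodd : Odd p) :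
    Odd (wCoeff p - 2 ^ ((p - 3) / 2)) ∧
      Zsqrtd.norm (Mers p) = (wCoeff p - 2 ^ ((p - 3) / 2)) * 2 ^ ((p + 3) / 2) - 1 := by
  obtain ⟨k, rfl⟩ : ∃ k, p = 2*k+5 := by
    obtain ⟨m, hm⟩ := hodd; exact ⟨m - 2, by omega⟩
  have e1 : (2*k+5-3)/2 = k+1 := by omega
  have e2 : (2*k+5+3)/2 = k+4 := by omega
  rw [e1, e2]
  set u : ℤ√2 := (1 + Zsqrtd.sqrtd) ^ (2*k+5) with hu
  have hvv : vCoeff (2*k+5) = u.re := rfl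
  have hww : wCoeff (2*k+5) = u.im := rfl
  rw [hww]
  constructor
  · obtain ⟨j, hj⟩ := im_odd (k+2)
    have hje : u.im = 2*j+1 := by
      rw [hu]; convert hj using 3; try ring
    exact ⟨j - 2^k, by rw [hje]; try ring⟩
  · have hnu : u.re^2 - 2*u.im^2 = -1 := by
      have h1 : Zsqrtd.normMonoidHom u = ((Zsqrtd.normMonoidHom (1 + Zsqrtd.sqrtd : ℤ√2)))^(2*k+5) := by
        rw [hu, map_pow]
      have h2 : Zsqrtd.normMonoidHom (1 + Zsqrtd.sqrtd : ℤ√2) = -1 := by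
        simp [Zsqrtd.normMonoidHom, Zsqrtd.norm]
      rw [h2, Odd.neg_one_pow ⟨k+2, by ring⟩] at h1
      have h3 : Zsqrtd.normMonoidHom u = u.re*u.re - 2*(u.im*u.im) := by
        simp [Zsqrtd.normMonoidHom, Zsqrtd.norm]; ring
      rw [h3] at h1; nlinarith [h1]
    have hs2 : (Zsqrtd.sqrtd : ℤ√2)^2 = ((2:ℤ) : ℤ√2) := by
      ext <;> simp [pow_two, Zsqrtd.re_mul, Zsqrtd.im_mul]
    have halpha : alphaZ = Zsqrtd.sqrtd * (1 + Zsqrtd.sqrtd) := by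
      ext <;> simp [alphaZ, Zsqrtd.re_mul, Zsqrtd.im_mul]
    have hsd : (Zsqrtd.sqrtd : ℤ√2)^(2*k+5) = (((2:ℤ)^(k+2) : ℤ) : ℤ√2) * Zsqrtd.sqrtd := by
      have h5 : (2*k+5) = 2*(k+2)+1 := by ring
      rw [h5, pow_succ, pow_mul, hs2]
      push_cast
      ring
    have hpow : alphaZ ^ (2*k+5) = (((2:ℤ)^(k+2) : ℤ) : ℤ√2) * Zsqrtd.sqrtd * u := by
      rw [halpha, mul_pow, hsd, hu]
    have hre : (alphaZ ^ (2*k+5)).re = 2^(k+2) * (2*u.im) := by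
      rw [hpow]
      simp only [Zsqrtd.re_mul, Zsqrtd.im_mul, Zsqrtd.re_intCast, Zsqrtd.im_intCast,
        Zsqrtd.re_sqrtd, Zsqrtd.im_sqrtd]
      ring
    have him : (alphaZ ^ (2*k+5)).im = 2^(k+2) * u.re := by
      rw [hpow]
      simp only [Zsqrtd.re_mul, Zsqrtd.im_mul, Zsqrtd.re_intCast, Zsqrtd.im_intCast,
        Zsqrtd.re_sqrtd, Zsqrtd.im_sqrtd]
      ring
    have hnorm : Zsqrtd.norm (Mers (2*k+5)) =
        ((2^(k+2)*(2*u.im) - 1)^2 - 2*(2^(k+2)*u.re)^2) * (-1) := by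
      rw [Mers, Zsqrtd.norm_mul]
      congr 1
      · simp only [Zsqrtd.norm, Zsqrtd.re_sub, Zsqrtd.im_sub, Zsqrtd.re_one, Zsqrtd.im_one,
          hre, him]
        ring
    rw [hnorm]
    linear_combination (32*(2:ℤ)^k*(2:ℤ)^k) * hnu
end

section
/- Let p be an odd rational prime. If p ≡ 1 or 7 (mod 8) then N(M_{p,α}) ≡ 4·w_p − 3 (mod p), and if p ≡ 3 or 5 (mod 8) then N(M_{p,α}) ≡ −4·w_p − 3 (mod p), where w_p is the coefficient of √2 in (1+√2)^p. -/
/-- **(Property 4, §1).** For an odd prime `p`: if `p ≡ ±1 (mod 8)` then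
`N(M_{p,α}) ≡ 4w_p - 3 (mod p)`, and if `p ≡ ±3 (mod 8)` then
`N(M_{p,α}) ≡ -4w_p - 3 (mod p)`. -/
theorem norm_mersenne_mod_p (p : ℕ) (hp : Nat.Prime p) (hodd : Odd p) :
    (p % 8 = 1 ∨ p % 8 = 7 →
      Zsqrtd.norm (Mers p) ≡ 4 * wCoeff p - 3 [ZMOD (p : ℤ)]) ∧
    (p % 8 = 3 ∨ p % 8 = 5 →
      Zsqrtd.norm (Mers p) ≡ -4 * wCoeff p - 3 [ZMOD (p : ℤ)]) := by
  haveI : Fact (Nat.Prime p) := ⟨hp⟩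
  obtain ⟨s, hs⟩ := hodd
  set c : ℤ := 2 ^ s with hc
  have halpha : alphaZ = Zsqrtd.sqrtd * (1 + Zsqrtd.sqrtd) := by
    rw [mul_add, mul_one, Zsqrtd.dmuld]; rfl
  have hsq : (Zsqrtd.sqrtd : ℤ√2) ^ p = (c : ℤ√2) * Zsqrtd.sqrtd := by
    rw [hs, pow_add, pow_mul, pow_one, sq, Zsqrtd.dmuld, hc]
    push_cast; ring
  set u : ℤ√2 := (1 + Zsqrtd.sqrtd) ^ p with hu
  have hre : u.re = vCoeff p := rfl
  have him : u.im = wCoeff p := rfl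
  have hαp : alphaZ ^ p = (c : ℤ√2) * Zsqrtd.sqrtd * u := by
    rw [halpha, mul_pow, hsq]
  have hnu : vCoeff p ^ 2 - 2 * wCoeff p ^ 2 = -1 := by
    have h1 : u.norm = ((1 + Zsqrtd.sqrtd : ℤ√2).norm) ^ p := by
      rw [hu]; exact map_pow Zsqrtd.normMonoidHom _ p
    have h2 : ((1 + Zsqrtd.sqrtd : ℤ√2).norm) = -1 := by
      simp [Zsqrtd.norm_def]
    rw [h2, Odd.neg_one_pow ⟨s, by omega⟩, Zsqrtd.norm_def] at h1
    rw [← hre, ← him]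
    linarith [h1]
  have hMers : (Mers p).norm =
      -((c * (2 * wCoeff p) - 1)^2 - 2 * (c * vCoeff p)^2) := by
    rw [Mers, Zsqrtd.norm_mul, hαp]
    have h3 : ((Zsqrtd.sqrtd : ℤ√2) - 1).norm = -1 := by simp [Zsqrtd.norm_def]
    rw [h3, Zsqrtd.norm_def]
    simp only [Zsqrtd.re_mul, Zsqrtd.im_mul, Zsqrtd.re_sqrtd, Zsqrtd.im_sqrtd,
      Zsqrtd.re_sub, Zsqrtd.im_sub, Zsqrtd.re_one, Zsqrtd.im_one,
      Zsqrtd.re_intCast, Zsqrtd.im_intCast, hre, him]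
    ring
  have hps : p / 2 = s := by omega
  have h2ne : (2 : ZMod p) ≠ 0 := by
    have : ((2:ℕ) : ZMod p) ≠ 0 := by
      rw [Ne, ZMod.natCast_eq_zero_iff]
      intro h
      have := Nat.le_of_dvd (by norm_num) h
      have := hp.two_le
      omega
    simpa using this
  have hp2 : p ≠ 2 := by omega
  have hE2 : ((2 : ZMod p) ^ s) ^ 2 = 1 := by
    rw [← pow_mul]
    have hms : s * 2 = p - 1 := by omega
    rw [hms, ZMod.pow_card_sub_one_eq_one h2ne]
  have hEor : (2 : ZMod p) ^ s = 1 ∨ (2 : ZMod p) ^ s = -1 := by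
    rw [sq] at hE2
    exact mul_self_eq_one_iff.mp hE2
  have key : ∀ t : ℤ, ((Mers p).norm : ZMod p) = (t : ZMod p) →
      (Mers p).norm ≡ t [ZMOD (p : ℤ)] := fun t h =>
    (ZMod.intCast_eq_intCast_iff _ _ _).mp h
  set V : ZMod p := ((vCoeff p : ℤ) : ZMod p) with hV
  set W : ZMod p := ((wCoeff p : ℤ) : ZMod p) with hW
  have hVW : V ^ 2 - 2 * W ^ 2 = -1 := by
    have h4 := congrArg (fun t : ℤ => (t : ZMod p)) hnu
    push_cast at h4
    exact h4
  have hcast : ((Mers p).norm : ZMod p) =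
      -(((2:ZMod p)^s * (2 * W) - 1)^2 - 2 * ((2:ZMod p)^s * V)^2) := by
    rw [hMers, hc]; push_cast; ring
  constructor
  · intro h18
    apply key
    have hsq2 : IsSquare (2 : ZMod p) := (ZMod.exists_sq_eq_two_iff hp2).mpr h18
    have hE1 : (2 : ZMod p) ^ s = 1 := by
      rw [← hps]; exact (ZMod.euler_criterion p h2ne).mp hsq2
    rw [hcast, hE1]
    push_cast
    linear_combination 2 * hVW
  · intro h35
    apply key
    have hnsq : ¬ IsSquare (2 : ZMod p) := by
      rw [ZMod.exists_sq_eq_two_iff hp2]; omega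
    have hE1 : (2 : ZMod p) ^ s = -1 := by
      rcases hEor with h | h
      · exact absurd ((ZMod.euler_criterion p h2ne).mpr (by rw [hps]; exact h)) hnsq
      · exact h
    rw [hcast, hE1]
    push_cast
    linear_combination 2 * hVW
end

section
/- Let n ≥ 2 be an integer. If N(M_{n,α}) is a rational prime, then n is prime. -/
lemma norm_alpha_pow (n : ℕ) : Zsqrtd.norm (alphaZ ^ n) = 2 ^ n := by
  induction n with
  | zero => simp [Zsqrtd.norm_def]
  | succ k ih => rw [pow_succ, Zsqrtd.norm_mul, ih, pow_succ]; norm_num [alphaZ, Zsqrtd.norm_def]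

lemma alpha_pow_re_im (n : ℕ) (hn : 1 ≤ n) :
    2 ^ n ≤ (alphaZ ^ n).re ∧ 1 ≤ (alphaZ ^ n).im := by
  induction n with
  | zero => omega
  | succ k ih =>
    rcases Nat.eq_or_lt_of_le hn with h | h
    · constructor <;> simp [← h, alphaZ]
    · have hk : 1 ≤ k := by omega
      obtain ⟨h1, h2⟩ := ih hk
      have hre : (alphaZ ^ (k+1)).re = 2 * (alphaZ ^ k).re + 2 * (alphaZ ^ k).im := by
        rw [pow_succ]; simp [alphaZ, Zsqrtd.re_mul]; ring
      have him : (alphaZ ^ (k+1)).im = (alphaZ ^ k).re + 2 * (alphaZ ^ k).im := by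
        rw [pow_succ]; simp [alphaZ, Zsqrtd.im_mul]; ring
      constructor
      · rw [hre, pow_succ]; nlinarith
      · rw [him]; nlinarith [pow_pos (show (0:ℤ) < 2 by norm_num) k]

lemma norm_mers (n : ℕ) :
    Zsqrtd.norm (Mers n) = 2 * (alphaZ ^ n).im ^ 2 - ((alphaZ ^ n).re - 1) ^ 2 := by
  rw [Mers, Zsqrtd.norm_mul]
  simp [Zsqrtd.norm_def]
  ring

lemma mers_strict_mono (n : ℕ) (hn : 1 ≤ n) :
    Zsqrtd.norm (Mers n) < Zsqrtd.norm (Mers (n+1)) := by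
  obtain ⟨h1, h2⟩ := alpha_pow_re_im n hn
  have hN : (alphaZ ^ n).re ^ 2 - 2 * (alphaZ ^ n).im ^ 2 = 2 ^ n := by
    have := norm_alpha_pow n
    rw [Zsqrtd.norm_def] at this
    nlinarith [this]
  have hre : (alphaZ ^ (n+1)).re = 2 * (alphaZ ^ n).re + 2 * (alphaZ ^ n).im := by
    rw [pow_succ]; simp [alphaZ, Zsqrtd.re_mul]; ring
  have him : (alphaZ ^ (n+1)).im = (alphaZ ^ n).re + 2 * (alphaZ ^ n).im := by
    rw [pow_succ]; simp [alphaZ, Zsqrtd.im_mul]; ring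
  rw [norm_mers, norm_mers, hre, him]
  nlinarith [pow_pos (show (0:ℤ) < 2 by norm_num) n]

lemma mers_mono {a b : ℕ} (ha : 1 ≤ a) (hab : a ≤ b) :
    Zsqrtd.norm (Mers a) ≤ Zsqrtd.norm (Mers b) := by
  induction b with
  | zero => omega
  | succ k ih =>
    rcases Nat.eq_or_lt_of_le hab with h | h
    · rw [h]
    · exact le_of_lt (lt_of_le_of_lt (ih (by omega)) (mers_strict_mono k (by omega)))

lemma mers_two : Zsqrtd.norm (Mers 2) = 7 := by decide

lemma mers_dvd {a n : ℕ} (h : a ∣ n) : Mers a ∣ Mers n := by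
  obtain ⟨k, rfl⟩ := h
  simp only [Mers]
  have : alphaZ ^ a - 1 ∣ alphaZ ^ (a * k) - 1 := by
    rw [pow_mul]
    simpa using sub_dvd_pow_sub_pow (alphaZ ^ a) 1 k
  exact mul_dvd_mul_right this _

lemma mers_lt {a b : ℕ} (ha : 1 ≤ a) (hab : a < b) :
    Zsqrtd.norm (Mers a) < Zsqrtd.norm (Mers b) := by
  induction b with
  | zero => omega
  | succ k ih =>
    rcases Nat.lt_or_ge a k with h | h
    · exact lt_trans (ih h) (mers_strict_mono k (by omega))
    · have : a = k := by omega
      subst this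
      exact mers_strict_mono a ha

/-- **(Property 1 of `N(M_{p,α})`, §1).** If `n ≥ 2` and `N(M_{n,α})` is a rational
prime, then `n` is prime. -/
theorem nat_prime_of_norm_mersenne_prime (n : ℕ) (hn : 2 ≤ n)
    (hprime : Prime (Zsqrtd.norm (Mers n))) : Nat.Prime n := by
  by_contra hnp
  obtain ⟨m, hm, hm2, hmn⟩ := Nat.exists_dvd_of_not_prime2 hn hnp
  obtain ⟨c, hc⟩ := mers_dvd hm
  have hdvd : Zsqrtd.norm (Mers m) ∣ Zsqrtd.norm (Mers n) :=
    ⟨Zsqrtd.norm c, by rw [hc, Zsqrtd.norm_mul]⟩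
  have h7 : 7 ≤ Zsqrtd.norm (Mers m) := mers_two ▸ mers_mono (by norm_num) hm2
  have hlt : Zsqrtd.norm (Mers m) < Zsqrtd.norm (Mers n) := mers_lt (by omega) hmn
  have hp : Nat.Prime (Zsqrtd.norm (Mers n)).natAbs := Int.prime_iff_natAbs_prime.mp hprime
  have hd : (Zsqrtd.norm (Mers m)).natAbs ∣ (Zsqrtd.norm (Mers n)).natAbs :=
    Int.natAbs_dvd_natAbs.mpr hdvd
  rcases hp.eq_one_or_self_of_dvd _ hd with h | h <;> omega
end

section
/- Let p ≥ 3 be an odd rational prime and suppose q = N(M_{p,α}) is a rational prime. Then 2 is a quadratic residue modulo q; that is, there exists an integer z with z² ≡ 2 (mod q). -/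
theorem aux_qr (q a b : ℤ) (hq : Prime q) (h : q = a * a - 2 * (b * b)) :
    ∃ z : ℤ, z ^ 2 ≡ 2 [ZMOD q] := by
  have hkp : q.natAbs.Prime := Int.prime_iff_natAbs_prime.mp hq
  haveI : Fact q.natAbs.Prime := ⟨hkp⟩
  set k := q.natAbs with hk
  have hkq : ((k : ℤ)) ∣ q := by rw [hk]; exact Int.natAbs_dvd.mpr dvd_rfl
  have hqk : ∀ x : ℤ, ((k : ℤ)) ∣ x → q ∣ x := fun x hx => by
    rw [hk] at hx; exact Int.natAbs_dvd.mp hx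
  have hb : (b : ZMod k) ≠ 0 := by
    intro hb0
    have hdvdb : q ∣ b := hqk b ((ZMod.intCast_zmod_eq_zero_iff_dvd b k).mp hb0)
    have hdvda : q ∣ a := by
      have h1 : q ∣ a * a := by
        have h2 : q ∣ 2 * (b * b) := ((hdvdb.mul_left 2).mul_right b).trans (dvd_of_eq (by ring))
        calc q ∣ q + 2 * (b * b) := Dvd.dvd.add dvd_rfl h2
          _ = a * a := by rw [h]; ring
      exact hq.dvd_of_dvd_pow (n := 2) (by rwa [sq])
    obtain ⟨a', ha'⟩ := hdvda
    obtain ⟨b', hb'⟩ := hdvdb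
    have h2 : q * q ∣ q := by
      conv_rhs => rw [h, ha', hb']
      exact ⟨a' * a' - 2 * (b' * b'), by ring⟩
    have h3 : q ∣ 1 := (mul_dvd_mul_iff_left hq.ne_zero).mp (by simpa using h2)
    exact hq.not_unit (isUnit_of_dvd_one h3)
  have hq0 : ((q : ZMod k)) = 0 := (ZMod.intCast_zmod_eq_zero_iff_dvd q k).mpr hkq
  have key : ((a : ZMod k)) ^ 2 = 2 * (b : ZMod k) ^ 2 := by
    have hc := congrArg (fun x : ℤ => (x : ZMod k)) h
    push_cast at hc
    rw [hq0] at hc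
    linear_combination -hc
  set z0 : ZMod k := (a : ZMod k) * (b : ZMod k)⁻¹ with hz0
  have hz0sq : z0 ^ 2 = 2 := by
    rw [hz0, mul_pow, key, inv_pow, mul_assoc,
      mul_inv_cancel₀ (pow_ne_zero 2 hb), mul_one]
  refine ⟨(z0.val : ℤ), ?_⟩
  have hcast : ((z0.val : ZMod k)) = z0 := by
    simp [ZMod.natCast_val, ZMod.cast_id]
  have hzero : ((((z0.val : ℤ)) ^ 2 - 2 : ℤ) : ZMod k) = 0 := by
    push_cast
    rw [hcast, hz0sq]
    ring
  have hdvd : q ∣ ((z0.val : ℤ)) ^ 2 - 2 :=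
    hqk _ ((ZMod.intCast_zmod_eq_zero_iff_dvd _ k).mp hzero)
  exact (Int.modEq_iff_dvd.mpr (by simpa using hdvd)).symm

/-- **(Property 6, §1).** If `p ≥ 3` is an odd rational prime and `q = N(M_{p,α})` is
a rational prime, then `2` is a quadratic residue modulo `q`. -/
theorem two_is_qr_mod_norm_mersenne (p : ℕ) (hp3 : 3 ≤ p) (hp : Nat.Prime p)
    (hodd : Odd p) (hprime : Prime (Zsqrtd.norm (Mers p))) :
    ∃ z : ℤ, z ^ 2 ≡ 2 [ZMOD Zsqrtd.norm (Mers p)] := by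
  exact aux_qr _ (Mers p).re (Mers p).im hprime (by rw [Zsqrtd.norm]; ring)
end
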